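/- arXiv:1805.08612 — 6 statements merged into one kernel-verified Lean document; each statement's English description precedes it below -/
import Mathlib

section
/- Let r_1,...,r_k be positive reals with r_i ≤ 2^{(i+1-k)/2} r for all i = 1,...,k, where r > 0. Then Σ_{i=1}^k (k+1-i) r_i ≤ γ · r, where γ = 2 Σ_{j≥1} j 2^{-j/2}. -/
theorem starting_sequence_cost (k : ℕ) (hk : 1 ≤ k) (r : ℝ) (hr : 0 < r)
    (rs : ℕ → ℝ)
    (hpos : ∀ i, 1 ≤ i → i ≤ k → 0 < rs i)
    (hbd : ∀ i, 1 ≤ i → i ≤ k →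
      rs i ≤ (2 : ℝ) ^ (((i : ℝ) + 1 - (k : ℝ)) / 2) * r) :
    ∑ i ∈ Finset.Icc 1 k, ((k : ℝ) + 1 - (i : ℝ)) * rs i ≤
      (2 * ∑' j : ℕ, (j : ℝ) * (2 : ℝ) ^ (-(j : ℝ) / 2)) * r := by
  set f : ℕ → ℝ := fun j => (j : ℝ) * (2 : ℝ) ^ (-(j : ℝ) / 2) with hf
  have hfnn : ∀ j, 0 ≤ f j := fun j =>
    mul_nonneg (Nat.cast_nonneg j) (Real.rpow_nonneg (by norm_num) _)
  have hsum : Summable f := by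
    have h : ∀ j : ℕ, f j = (j : ℝ) ^ 1 * ((2 : ℝ) ^ (-(1:ℝ)/2)) ^ j := by
      intro j
      rw [hf, ← Real.rpow_natCast ((2:ℝ) ^ (-(1:ℝ)/2)) j,
        ← Real.rpow_mul (by norm_num)]
      ring_nf
    rw [funext h]
    apply summable_pow_mul_geometric_of_norm_lt_one
    rw [Real.norm_eq_abs, abs_of_nonneg (Real.rpow_nonneg (by norm_num) _)]
    exact Real.rpow_lt_one_of_one_lt_of_neg (by norm_num) (by norm_num)
  have h1 : ∑ i ∈ Finset.Icc 1 k, ((k : ℝ) + 1 - (i : ℝ)) * rs i ≤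
      ∑ i ∈ Finset.Icc 1 k, 2 * f (k + 1 - i) * r := by
    apply Finset.sum_le_sum
    intro i hi
    rw [Finset.mem_Icc] at hi
    have hik : i ≤ k := hi.2
    have h1i : 1 ≤ i := hi.1
    have hcast : ((k + 1 - i : ℕ) : ℝ) = (k : ℝ) + 1 - (i : ℝ) := by
      have : i ≤ k + 1 := by omega
      push_cast [Nat.cast_sub this]
      ring
    have hexp : ((i : ℝ) + 1 - (k : ℝ)) / 2 = 1 + (-(((k + 1 - i : ℕ)) : ℝ)/2) := by
      rw [hcast]; ring
    have hnn : (0:ℝ) ≤ (k : ℝ) + 1 - (i : ℝ) := by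
      have : (i:ℝ) ≤ (k:ℝ) := by exact_mod_cast hik
      linarith
    calc ((k : ℝ) + 1 - (i : ℝ)) * rs i
        ≤ ((k : ℝ) + 1 - (i : ℝ)) * ((2 : ℝ) ^ (((i : ℝ) + 1 - (k : ℝ)) / 2) * r) :=
          mul_le_mul_of_nonneg_left (hbd i h1i hik) hnn
      _ = 2 * f (k + 1 - i) * r := by
          simp only [hf]
          rw [hexp, Real.rpow_add (by norm_num), Real.rpow_one, ← hcast]
          ring
  have h2 : ∑ i ∈ Finset.Icc 1 k, 2 * f (k + 1 - i) * r =
      2 * (∑ j ∈ Finset.Icc 1 k, f j) * r := by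
    rw [Finset.mul_sum, Finset.sum_mul]
    apply Finset.sum_nbij' (fun a => k + 1 - a) (fun a => k + 1 - a)
    · simp only [Finset.mem_Icc]; intros; omega
    · simp only [Finset.mem_Icc]; intros; omega
    · simp only [Finset.mem_Icc]; intro a ha; omega
    · simp only [Finset.mem_Icc]; intro a ha; omega
    · intro a ha
      rfl
  have h3 : ∑ j ∈ Finset.Icc 1 k, f j ≤ ∑' j, f j :=
    Summable.sum_le_tsum _ (fun j _ => hfnn j) hsum
  calc ∑ i ∈ Finset.Icc 1 k, ((k : ℝ) + 1 - (i : ℝ)) * rs i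
      ≤ 2 * (∑ j ∈ Finset.Icc 1 k, f j) * r := by rw [← h2]; exact h1
    _ ≤ (2 * ∑' j, f j) * r := by
        apply mul_le_mul_of_nonneg_right _ hr.le
        linarith
end

section
/- Define the merge-cost recurrence u_1 = ... = u_6 = 0, u_{2k} = u_k + u_{k-2} + 3k for k ≥ 4, and u_{2k+1} = u_k + u_{k-1} + 3k+2 for k ≥ 3. Then u_n ≥ (3/2) n log₂(n) - 7(n+4) for all n ≥ 1. -/
open Real

noncomputable def tsPhi (x : ℝ) : ℝ :=
  3 / 2 * (x + 2) * Real.logb 2 (x + 2) - 6 * (x + 2) + 3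

lemma ts_mid_ineq (a b : ℝ) (ha : 0 ≤ a) (hb : 0 ≤ b) :
    (a + b) * Real.logb 2 ((a + b) / 2) ≤ a * Real.logb 2 a + b * Real.logb 2 b := by
  have hconv := Real.convexOn_mul_log
  have h := hconv.2 (Set.mem_Ici.mpr ha) (Set.mem_Ici.mpr hb)
    (by norm_num : (0:ℝ) ≤ 1/2) (by norm_num : (0:ℝ) ≤ 1/2) (by norm_num)
  simp only [smul_eq_mul] at h
  have h2 : (1/2 : ℝ) * a + 1/2 * b = (a + b) / 2 := by ring
  rw [h2] at h
  have key : (a + b) * Real.log ((a + b) / 2) ≤ a * Real.log a + b * Real.log b := by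
    nlinarith [h]
  have hlog2 : 0 < Real.log 2 := Real.log_pos (by norm_num)
  simp only [Real.logb]
  rw [show (a + b) * (Real.log ((a + b) / 2) / Real.log 2)
        = ((a + b) * Real.log ((a + b) / 2)) / Real.log 2 from by ring,
      show a * (Real.log a / Real.log 2) + b * (Real.log b / Real.log 2)
        = (a * Real.log a + b * Real.log b) / Real.log 2 from by ring]
  exact div_le_div_of_nonneg_right key hlog2.le

lemma ts_even_step (x : ℝ) (hx : 2 ≤ x) :
    tsPhi (2 * x) ≤ tsPhi x + tsPhi (x - 2) + 3 * x := by
  have hdouble : Real.logb 2 (2 * x + 2) = 1 + Real.logb 2 (x + 1) := by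
    rw [show 2 * x + 2 = 2 * (x + 1) by ring,
      Real.logb_mul (by norm_num) (by positivity),
      Real.logb_self_eq_one (by norm_num)]
  have hmid := ts_mid_ineq x (x + 2) (by linarith) (by linarith)
  rw [show (x + (x + 2)) / 2 = x + 1 by ring] at hmid
  unfold tsPhi
  rw [show x - 2 + 2 = x by ring, show 2 * x + 2 = 2 * x + 2 by ring]
  rw [hdouble]
  nlinarith [hmid]

lemma ts_odd_step (x : ℝ) (hx : 1 ≤ x) :
    tsPhi (2 * x + 1) ≤ tsPhi x + tsPhi (x - 1) + 3 * x + 2 := by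
  have hdouble : Real.logb 2 (2 * x + 1 + 2) = 1 + Real.logb 2 (x + 3/2) := by
    rw [show 2 * x + 1 + 2 = 2 * (x + 3/2) by ring,
      Real.logb_mul (by norm_num) (by positivity),
      Real.logb_self_eq_one (by norm_num)]
  have hmid := ts_mid_ineq (x + 1) (x + 2) (by linarith) (by linarith)
  rw [show ((x + 1) + (x + 2)) / 2 = x + 3/2 by ring] at hmid
  unfold tsPhi
  rw [show x - 1 + 2 = x + 1 by ring]
  rw [hdouble]
  nlinarith [hmid]

theorem timsort_adversarial_lower_bound (u : ℕ → ℝ)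
    (h0 : ∀ n, 1 ≤ n → n ≤ 6 → u n = 0)
    (heven : ∀ k, 4 ≤ k → u (2 * k) = u k + u (k - 2) + 3 * k)
    (hodd : ∀ k, 3 ≤ k → u (2 * k + 1) = u k + u (k - 1) + 3 * k + 2) :
    ∀ n : ℕ, 1 ≤ n →
      u n ≥ 3 / 2 * (n : ℝ) * Real.logb 2 n - 7 * ((n : ℝ) + 4) := by
  have key : ∀ n : ℕ, 1 ≤ n → tsPhi n ≤ u n := by
    intro n
    induction n using Nat.strong_induction_on with
    | _ n ih =>
      intro hn
      by_cases h6 : n ≤ 6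
      · rw [h0 n hn h6]
        have hcast : (n : ℝ) ≤ 6 := by exact_mod_cast h6
        have hcast1 : (1 : ℝ) ≤ (n : ℝ) := by exact_mod_cast hn
        have hL : Real.logb 2 ((n : ℝ) + 2) ≤ 3 := by
          have h8 : Real.logb 2 ((n : ℝ) + 2) ≤ Real.logb 2 8 :=
            Real.logb_le_logb_of_le (by norm_num) (by linarith) (by linarith)
          have : Real.logb 2 8 = 3 := by
            rw [show (8:ℝ) = 2 ^ (3:ℕ) by norm_num, Real.logb_pow,
              Real.logb_self_eq_one (by norm_num)]
            norm_num
          linarith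
        unfold tsPhi
        nlinarith [hL, hcast1]
      · push_neg at h6
        rcases Nat.even_or_odd n with he | ho
        · obtain ⟨k, hk⟩ := he
          have hk4 : 4 ≤ k := by omega
          have hn2k : n = 2 * k := by omega
          have ih1 := ih k (by omega) (by omega)
          have ih2 := ih (k - 2) (by omega) (by omega)
          have hcast : ((k - 2 : ℕ) : ℝ) = (k : ℝ) - 2 := by
            push_cast [Nat.cast_sub (by omega : 2 ≤ k)]; ring
          rw [hcast] at ih2
          have hstep := ts_even_step (k : ℝ) (by exact_mod_cast (by omega : 2 ≤ k))
          rw [hn2k, heven k hk4]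
          have : ((2 * k : ℕ) : ℝ) = 2 * (k : ℝ) := by push_cast; ring
          rw [this]
          linarith
        · obtain ⟨k, hk⟩ := ho
          have hk3 : 3 ≤ k := by omega
          have ih1 := ih k (by omega) (by omega)
          have ih2 := ih (k - 1) (by omega) (by omega)
          have hcast : ((k - 1 : ℕ) : ℝ) = (k : ℝ) - 1 := by
            push_cast [Nat.cast_sub (by omega : 1 ≤ k)]; ring
          rw [hcast] at ih2
          have hstep := ts_odd_step (k : ℝ) (by exact_mod_cast (by omega : 1 ≤ k))
          rw [hk, hodd k hk3]
          have : ((2 * k + 1 : ℕ) : ℝ) = 2 * (k : ℝ) + 1 := by push_cast; ring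
          rw [this]
          linarith
  intro n hn
  have hkey := key n hn
  have hcast1 : (1 : ℝ) ≤ (n : ℝ) := by exact_mod_cast hn
  have hLn : 0 ≤ Real.logb 2 (n : ℝ) := Real.logb_nonneg (by norm_num) hcast1
  have hLmono : Real.logb 2 (n : ℝ) ≤ Real.logb 2 ((n : ℝ) + 2) :=
    Real.logb_le_logb_of_le (by norm_num) (by linarith) (by linarith)
  have hprod : (n : ℝ) * Real.logb 2 (n : ℝ) ≤ ((n : ℝ) + 2) * Real.logb 2 ((n : ℝ) + 2) := by
    apply mul_le_mul (by linarith) hLmono hLn (by linarith)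
  unfold tsPhi at hkey
  nlinarith [hkey, hprod]
end

section
/- Let H be the binary entropy function and define F(y) = (3/2)(y H(2 - 1/y) + H(y)) - (1+y). Then F(y) ≥ 0 for all y with 1/2 ≤ y ≤ (1+φ²)/(1+2φ²), where φ = (1+√5)/2. -/
theorem F_nonneg (φ : ℝ) (hφ : φ = (1 + Real.sqrt 5) / 2)
    (H : ℝ → ℝ)
    (hH : ∀ t, H t = -t * Real.logb 2 t - (1 - t) * Real.logb 2 (1 - t))
    (y : ℝ) (h1 : 1 / 2 ≤ y) (h2 : y ≤ (1 + φ ^ 2) / (1 + 2 * φ ^ 2)) :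
    0 ≤ 3 / 2 * (y * H (2 - 1 / y) + H y) - (1 + y) := by
  have hs5 : Real.sqrt 5 ^ 2 = 5 := Real.sq_sqrt (by norm_num)
  have hsn : (0:ℝ) ≤ Real.sqrt 5 := Real.sqrt_nonneg 5
  have hs3 : Real.sqrt 5 ≤ 3 := by nlinarith
  have hy59 : y ≤ 59/100 := by
    have hden : (0:ℝ) < 1 + 2 * φ ^ 2 := by rw [hφ]; nlinarith
    have : (1 + φ ^ 2) / (1 + 2 * φ ^ 2) ≤ 59/100 := by
      rw [div_le_iff₀ hden, hφ]; nlinarith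
    linarith
  have hl2 : (0:ℝ) < Real.log 2 := Real.log_pos (by norm_num)
  rcases eq_or_lt_of_le h1 with heq | hlt
  · subst heq
    rw [hH, hH]
    norm_num
    rw [show (1:ℝ)/2 = (2:ℝ)⁻¹ by norm_num, Real.logb_inv,
      Real.logb_self_eq_one (by norm_num)]
    norm_num
  · have hy0 : (0:ℝ) < y := by linarith
    have ha : (0:ℝ) < 2 * y - 1 := by linarith
    have hb : (0:ℝ) < 1 - y := by linarith
    have h2y : 2 - 1 / y = (2 * y - 1) / y := by field_simp
    have hA : Real.logb 2 (2 - 1 / y) = Real.logb 2 (2 * y - 1) - Real.logb 2 y := by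
      rw [h2y, Real.logb_div ha.ne' hy0.ne']
    have h1m : 1 - (2 - 1 / y) = (1 - y) / y := by field_simp; ring
    have hB : Real.logb 2 (1 - (2 - 1 / y)) = Real.logb 2 (1 - y) - Real.logb 2 y := by
      rw [h1m, Real.logb_div hb.ne' hy0.ne']
    set a := 2 * y - 1 with ha_def
    have ha18 : a ≤ 18/100 := by rw [ha_def]; linarith
    have ha1 : (0:ℝ) < 1 - a := by rw [ha_def]; linarith
    clear_value a
    -- log a ≤ -(4/3) log 2
    have hla : Real.log a ≤ -(4/3) * Real.log 2 := by
      have hpow : a ^ 3 ≤ (18/100:ℝ) ^ 3 := pow_le_pow_left₀ ha.le ha18 3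
      have h3 : a ^ 3 ≤ (1/16 : ℝ) := by nlinarith
      have hlog : Real.log (a ^ 3) ≤ Real.log (1/16 : ℝ) :=
        Real.log_le_log (by positivity) h3
      rw [Real.log_pow] at hlog
      have h16 : Real.log (1/16 : ℝ) = -(4 * Real.log 2) := by
        rw [show (1/16 : ℝ) = ((2:ℝ)^(4:ℕ))⁻¹ by norm_num, Real.log_inv, Real.log_pow]
        push_cast; ring
      rw [h16] at hlog
      push_cast at hlog
      linarith
    have hlb : (1 - a) * Real.log (1 - a) ≤ 0 := by
      have : Real.log (1 - a) ≤ 0 := Real.log_nonpos (by linarith) (by linarith)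
      nlinarith
    have key : 3/2 * (a * Real.log a + (1 - a) * Real.log (1 - a)) + 2 * a * Real.log 2 ≤ 0 := by
      have h1' : a * Real.log a ≤ a * (-(4/3) * Real.log 2) :=
        mul_le_mul_of_nonneg_left hla ha.le
      nlinarith
    have hsplit : Real.log (1 - a) = Real.log 2 + Real.log (1 - y) := by
      rw [show (1 - a : ℝ) = 2 * (1 - y) by rw [ha_def]; ring,
        Real.log_mul (by norm_num) hb.ne']
    have key2 : 0 ≤ -(3/2) * (a * Real.log a + 2 * (1 - y) * Real.log (1 - y))
        - (1 + y) * Real.log 2 := by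
      rw [hsplit] at key
      have hay : (1 : ℝ) - a = 2 * (1 - y) := by rw [ha_def]; ring
      have e : (1 - a) * (Real.log 2 + Real.log (1 - y))
          = 2 * (1 - y) * Real.log 2 + 2 * (1 - y) * Real.log (1 - y) := by rw [hay]; ring
      rw [e] at key
      have e2 : 2 * a * Real.log 2 = (4 * y - 2) * Real.log 2 := by rw [ha_def]; ring
      rw [e2] at key
      linarith
    have hstruct : 3 / 2 * (y * H (2 - 1 / y) + H y) - (1 + y)
        = -(3/2) * (a * Real.logb 2 a + 2 * (1 - y) * Real.logb 2 (1 - y)) - (1 + y) := by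
      rw [hH, hH, hA, hB, h1m, h2y, ha_def]
      generalize Real.logb 2 (2 * y - 1) = A
      generalize Real.logb 2 (1 - y) = B
      generalize Real.logb 2 y = C
      field_simp
      ring
    have hconv : -(3/2) * (a * Real.logb 2 a + 2 * (1 - y) * Real.logb 2 (1 - y)) - (1 + y)
        = (-(3/2) * (a * Real.log a + 2 * (1 - y) * Real.log (1 - y))
          - (1 + y) * Real.log 2) / Real.log 2 := by
      rw [eq_div_iff hl2.ne']
      simp only [Real.logb]
      field_simp
    rw [hstruct, hconv]
    exact div_nonneg key2 hl2.le
end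

section
/- Let φ = (1+√5)/2. Suppose positive reals r_2,...,r_h satisfy r_2 + ... + r_{i-1} < φ r_i for all 3 ≤ i ≤ h, together with r_{i-2} + r_{i-1} < r_i for all 5 ≤ i ≤ h, r_2 < r_3, and r_2 + r_3 < r_4. Then for any new value r_1 with r_1 < r_2 and r_1 + r_2 < r_3, the shifted sequence (r_1, r_2,..., r_h) again satisfies r_1 + ... + r_{i-1} < φ r_i for all 3 ≤ i ≤ h+1 when reindexed. -/
theorem push_preserves_phi_invariant (φ : ℝ) (hφ : φ = (1 + Real.sqrt 5) / 2)
    (h : ℕ) (r : ℕ → ℝ)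
    (hpos : ∀ i, 1 ≤ i → i ≤ h → 0 < r i)
    (hinv : ∀ i, 3 ≤ i → i ≤ h → ∑ j ∈ Finset.Icc 2 (i - 1), r j < φ * r i)
    (hfib : ∀ i, 5 ≤ i → i ≤ h → r (i - 2) + r (i - 1) < r i)
    (h23 : r 2 < r 3) (h234 : r 2 + r 3 < r 4)
    (h12 : r 1 < r 2) (h123 : r 1 + r 2 < r 3) :
    ∀ i, 2 ≤ i → i ≤ h → ∑ j ∈ Finset.Icc 1 (i - 1), r j < φ * r i := by
  have hs5 : Real.sqrt 5 ^ 2 = 5 := Real.sq_sqrt (by norm_num)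
  have hs5' : 1 < Real.sqrt 5 := by nlinarith [Real.sqrt_nonneg 5]
  have hφ1 : 1 < φ := by rw [hφ]; linarith
  have hφ0 : 0 < φ := by linarith
  have hφsq : φ ^ 2 = φ + 1 := by rw [hφ]; nlinarith
  have hfib' : ∀ i, 3 ≤ i → i ≤ h → r (i - 2) + r (i - 1) < r i := by
    intro i h3 hh
    rcases Nat.lt_or_ge i 5 with h5 | h5
    · interval_cases i
      · simpa using h123
      · simpa using h234
    · exact hfib i h5 hh
  intro i
  induction i using Nat.strong_induction_on with
  | _ i IH =>
    intro h2 hh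
    rcases Nat.lt_or_ge i 4 with h4 | h4
    · interval_cases i
      · have : Finset.Icc 1 (2 - 1) = {1} := by decide
        rw [this]
        simp only [Finset.sum_singleton]
        nlinarith [hpos 2 (by norm_num) hh]
      · have : Finset.Icc 1 (3 - 1) = {1, 2} := by decide
        rw [this, Finset.sum_pair (by norm_num)]
        have h3pos := hpos 3 (by norm_num) hh
        nlinarith
    · have hfibi := hfib' i (by omega) hh
      have hIH1 := IH (i - 1) (by omega) (by omega) (by omega)
      have hIH2 := IH (i - 2) (by omega) (by omega) (by omega)
      have e1 : i - 1 - 1 = i - 2 := by omega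
      have e2 : i - 2 - 1 = i - 3 := by omega
      rw [e1] at hIH1
      rw [e2] at hIH2
      have hsum1 : ∑ j ∈ Finset.Icc 1 (i - 1), r j
          = (∑ j ∈ Finset.Icc 1 (i - 2), r j) + r (i - 1) := by
        have he : i - 1 = (i - 2) + 1 := by omega
        rw [he, Finset.sum_Icc_succ_top (by omega)]
      have hsum2 : ∑ j ∈ Finset.Icc 1 (i - 2), r j
          = (∑ j ∈ Finset.Icc 1 (i - 3), r j) + r (i - 2) := by
        have he : i - 2 = (i - 3) + 1 := by omega
        rw [he, Finset.sum_Icc_succ_top (by omega)]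
      have hp1 := hpos (i - 1) (by omega) (by omega)
      have hp2 := hpos (i - 2) (by omega) (by omega)
      rcases le_or_gt (φ * r (i - 1)) (r i) with hc | hc
      · rw [hsum1]
        nlinarith [mul_le_mul_of_nonneg_left hc (le_of_lt hφ0)]
      · rw [hsum1, hsum2]
        nlinarith [mul_lt_mul_of_pos_left hfibi hφ0]
end

section
/- For positive reals r ≥ r' > 0, with potential pot(m) = (3/2) m log₂ m, the potential increase of merging satisfies pot(r+r') - pot(r) - pot(r') ≥ r' , i.e., r log₂((r+r')/r) + r' log₂((r+r')/r') ≥ r' (up to the factor 3/2 it even exceeds r'), and hence the merge cost r + r' is at most the potential increase plus r. -/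
theorem first_merge_potential (r r' : ℝ) (hr' : 0 < r') (hrr : r' ≤ r) :
    let pot : ℝ → ℝ := fun m => 3 / 2 * m * Real.logb 2 m
    r * Real.logb 2 ((r + r') / r) + r' * Real.logb 2 ((r + r') / r') ≥ r' ∧
    pot (r + r') - pot r - pot r' ≥ r' ∧
    r + r' ≤ (pot (r + r') - pot r - pot r') + r := by
  intro pot
  have hr : 0 < r := lt_of_lt_of_le hr' hrr
  have hs : 0 < r + r' := by linarith
  have h1 : (1 : ℝ) ≤ (r + r') / r := by
    rw [le_div_iff₀ hr]; linarith
  have h2 : (2 : ℝ) ≤ (r + r') / r' := by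
    rw [le_div_iff₀ hr']; linarith
  have hlog1 : 0 ≤ Real.logb 2 ((r + r') / r) := Real.logb_nonneg one_lt_two h1
  have hlog2 : 1 ≤ Real.logb 2 ((r + r') / r') := by
    have := Real.logb_le_logb_of_le (b := 2) one_lt_two (by norm_num : (0:ℝ) < 2) h2
    simpa using this
  have key : r * Real.logb 2 ((r + r') / r) + r' * Real.logb 2 ((r + r') / r') ≥ r' := by
    nlinarith [mul_nonneg hr.le hlog1]
  have hid : pot (r + r') - pot r - pot r' =
      3 / 2 * (r * Real.logb 2 ((r + r') / r) + r' * Real.logb 2 ((r + r') / r')) := by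
    simp only [pot]
    rw [Real.logb_div (ne_of_gt hs) (ne_of_gt hr), Real.logb_div (ne_of_gt hs) (ne_of_gt hr')]
    ring
  refine ⟨key, ?_, ?_⟩
  · rw [hid]; nlinarith
  · rw [hid]; nlinarith
end

section
/- Define f : [0,1] → ℝ by f(x) = (1+α)x for 0 ≤ x ≤ 1/2, f(x) = x + α(1-x) for 1/2 ≤ x ≤ θ, f(x) = αx for θ ≤ x ≤ 1, where α = 2+√7 and θ = α/(2α-1). Then for all x, y ∈ [0,1] with x(y+1) ≤ 1, we have x(1 + f(y)) ≤ min{f(1/2), f(x)}. -/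
set_option maxHeartbeats 2000000 in
theorem expansion_function_key_inequality :
    let α : ℝ := 2 + Real.sqrt 7
    let θ : ℝ := α / (2 * α - 1)
    let f : ℝ → ℝ := fun x =>
      if x ≤ 1 / 2 then (1 + α) * x
      else if x ≤ θ then x + α * (1 - x)
      else α * x
    ∀ x y : ℝ, 0 ≤ x → x ≤ 1 → 0 ≤ y → y ≤ 1 → x * (y + 1) ≤ 1 →
      x * (1 + f y) ≤ min (f (1 / 2)) (f x) := by
  intro α θ f x y hx0 hx1 hy0 hy1 hxy
  have hs2 : Real.sqrt 7 ^ 2 = 7 := Real.sq_sqrt (by norm_num)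
  have hsge : (2:ℝ) ≤ Real.sqrt 7 := by nlinarith [Real.sqrt_nonneg 7]
  have hsle : Real.sqrt 7 ≤ 3 := by nlinarith [Real.sqrt_nonneg 7]
  have ha1 : (3:ℝ) ≤ α := by simp only [α]; nlinarith
  have ha4 : (4:ℝ) ≤ α := by simp only [α]; nlinarith
  have ha2 : α ≤ 5 := by simp only [α]; nlinarith
  have ha3 : α ^ 2 = 4 * α + 3 := by simp only [α]; nlinarith
  have hden : (0:ℝ) < 2 * α - 1 := by linarith
  have hθhalf : 1 / 2 < θ := by
    simp only [θ]; rw [lt_div_iff₀ hden]; nlinarith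
  have hθ1 : θ < 1 := by
    simp only [θ]; rw [div_lt_one hden]; nlinarith
  simp only [f] at *
  rw [le_min_iff]
  constructor
  · -- x * (1 + f y) ≤ f (1/2) = (1+α)/2
    rw [if_pos (le_refl (1/2 : ℝ))]
    have hxyα : (1 + α) / 2 * (x * (y + 1)) ≤ (1 + α) / 2 * 1 :=
      mul_le_mul_of_nonneg_left hxy (by linarith)
    split_ifs with h1 h2
    · -- y ≤ 1/2
      have hb : x * ((1 + α) * (1 - y) - 2) ≥ 0 :=
        mul_nonneg hx0 (by nlinarith)
      nlinarith
    · -- 1/2 < y ≤ θ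
      rw [not_le] at h1
      have key : (1:ℝ) + α ≤ (3 * α - 1) * y := by nlinarith
      have hb : x * ((3 * α - 1) * y - 1 - α) ≥ 0 :=
        mul_nonneg hx0 (by linarith)
      nlinarith
    · -- θ < y
      rw [not_le] at h1 h2
      have hb : x * ((α - 1) * (1 - y)) ≥ 0 :=
        mul_nonneg hx0 (mul_nonneg (by linarith) (by linarith))
      nlinarith
  · -- x * (1 + f y) ≤ f x
    have hα1 : (0:ℝ) ≤ α - 1 := by linarith
    have hα3 : (0:ℝ) ≤ α - 3 := by linarith
    split_ifs with h1 h2 h3 h4 h5 h6 h7 h8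
    · -- y ≤ 1/2, x ≤ 1/2 : x(1+(1+α)y) ≤ (1+α)x
      have hA : (x / 2 - x * y) * (1 + α) ≥ 0 :=
        mul_nonneg (by nlinarith [mul_le_mul_of_nonneg_left h1 hx0]) (by linarith)
      have hB : x * (α - 1) ≥ 0 := mul_nonneg hx0 hα1
      nlinarith
    · -- y ≤ 1/2, 1/2 < x ≤ θ : x(1+(1+α)y) ≤ x + α(1-x)
      rw [not_le] at h2
      have h3' : x * (2 * α - 1) ≤ α := by rwa [← le_div_iff₀ hden]
      have hA : (x / 2 - x * y) * (1 + α) ≥ 0 :=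
        mul_nonneg (by nlinarith [mul_le_mul_of_nonneg_left h1 hx0]) (by linarith)
      have hB : x * (α - 3) ≥ 0 := mul_nonneg hx0 hα3
      nlinarith
    · -- y ≤ 1/2, θ < x : x(1+(1+α)y) ≤ αx
      rw [not_le] at h2 h3
      have hA : (x / 2 - x * y) * (1 + α) ≥ 0 :=
        mul_nonneg (by nlinarith [mul_le_mul_of_nonneg_left h1 hx0]) (by linarith)
      have hB : x * (α - 3) ≥ 0 := mul_nonneg hx0 hα3
      nlinarith
    · -- 1/2 < y ≤ θ, x ≤ 1/2 : x(1+y+α(1-y)) ≤ (1+α)x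
      rw [not_le] at h1
      have hB : x * y * (α - 1) ≥ 0 := mul_nonneg (mul_nonneg hx0 hy0) hα1
      nlinarith
    · -- 1/2 < y ≤ θ, 1/2 < x ≤ θ : tight case
      rw [not_le] at h1 h5
      have h6' : x * (2 * α - 1) ≤ α := by rwa [← le_div_iff₀ hden]
      have hA : (x * y - x / 2) * (α - 1) ≥ 0 :=
        mul_nonneg (by nlinarith [mul_le_mul_of_nonneg_left h1.le hx0]) hα1
      have hB : x * (α - 3) ≥ 0 := mul_nonneg hx0 hα3
      nlinarith
    · -- 1/2 < y ≤ θ, θ < x : x(1+y+α(1-y)) ≤ αx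
      rw [not_le] at h1 h5 h6
      have hA : (x * y - x / 2) * (α - 3) ≥ 0 :=
        mul_nonneg (by nlinarith [mul_le_mul_of_nonneg_left h1.le hx0]) hα3
      have hB : x * y * (α - 3) ≥ 0 := mul_nonneg (mul_nonneg hx0 hy0) hα3
      nlinarith [mul_le_mul_of_nonneg_left h1.le hx0]
    · -- θ < y, x ≤ 1/2 : x(1+αy) ≤ (1+α)x
      rw [not_le] at h1 h4
      have hB : x * (1 - y) * α ≥ 0 :=
        mul_nonneg (mul_nonneg hx0 (by linarith)) (by linarith)
      nlinarith
    · -- θ < y, 1/2 < x ≤ θ : x(1+αy) ≤ x + α(1-x)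
      rw [not_le] at h1 h4 h7
      have hA : α * (x * (y + 1)) ≤ α * 1 :=
        mul_le_mul_of_nonneg_left hxy (by linarith)
      nlinarith
    · -- θ < y, θ < x : x(1+αy) ≤ αx
      rw [not_le] at h1 h4 h7 h8
      have h8' : α < x * (2 * α - 1) := by rwa [div_lt_iff₀ hden] at h8
      have hA : α * (x * (y + 1)) ≤ α * 1 :=
        mul_le_mul_of_nonneg_left hxy (by linarith)
      nlinarith
end
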